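/- Let I ∈ Δ₂ be an increasing bijection of (0,1) onto (0,1). Let S be a map from {f measurable on (0,1) : ‖f‖_{m_I} < ∞} to measurable functions on (0,1) that is sublinear, i.e. |S(f+g)| ≤ |Sf| + |Sg| a.e. and |S(af)| = |a|·|Sf| a.e. for scalars a, and suppose there is C₀ > 0 with ‖Sf‖_∞ ≤ C₀·‖f‖_∞ and ‖Sf‖_{m_I} ≤ C₀·‖f‖_{m_I} for all f. Then there exists C > 0 such that (Sf)^*(t) ≤ C·(S_I f)(t) for all f with ‖f‖_{m_I} < ∞ and all t ∈ (0,1). If in addition I has the average property, then also (Sf)^{**}(t) ≤ C·(S_I f)(t) for such f and t, and (S_I f)^{**}(t) ≤ C·(S_I f)(t) for all f ∈ M_+(0,1) and t ∈ (0,1). -/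

import Mathlib

open MeasureTheory Set Filter
open scoped ENNReal

noncomputable section

/-- The nonincreasing rearrangement of `f` over `(0,1)`. -/
def rearr (f : ℝ → ℝ≥0∞) (t : ℝ) : ℝ≥0∞ :=
  sInf {l : ℝ≥0∞ | volume {s ∈ Set.Ioo (0:ℝ) 1 | l < f s} ≤ ENNReal.ofReal t}

/-- The maximal nonincreasing rearrangement `f^{**}(t) = (1/t) ∫_0^t f^*(s) ds`. -/
def dstar (f : ℝ → ℝ≥0∞) (t : ℝ) : ℝ≥0∞ :=
  (ENNReal.ofReal t)⁻¹ * ∫⁻ s in Set.Ioo (0:ℝ) t, rearr f s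

/-- The `L¹(0,1)` norm. -/
def lOne (f : ℝ → ℝ≥0∞) : ℝ≥0∞ := ∫⁻ t in Set.Ioo (0:ℝ) 1, f t

/-- The norm of the Marcinkiewicz-type space `m_I`. -/
def mNorm (I : ℝ → ℝ) (f : ℝ → ℝ≥0∞) : ℝ≥0∞ :=
  ⨆ t ∈ Set.Ioo (0:ℝ) 1, ENNReal.ofReal (I t) * rearr f t

/-- The norm of `m_Ĩ` where `Ĩ(t) = t / I(t)`. -/
def mNormTilde (I : ℝ → ℝ) (f : ℝ → ℝ≥0∞) : ℝ≥0∞ :=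
  ⨆ t ∈ Set.Ioo (0:ℝ) 1, ENNReal.ofReal (t / I t) * rearr f t

/-- The supremum operator `S_I f(t) = (1/I(t)) sup_{0<s≤t} I(s) f^*(s)`. -/
def SI (I : ℝ → ℝ) (f : ℝ → ℝ≥0∞) : ℝ → ℝ≥0∞ := fun t =>
  (ENNReal.ofReal (I t))⁻¹ * ⨆ s ∈ Set.Ioc (0:ℝ) t, ENNReal.ofReal (I s) * rearr f s

/-- The supremum operator `T_I f(t) = (I(t)/t) sup_{t≤s<1} (s/I(s)) f^*(s)`. -/
def TI (I : ℝ → ℝ) (f : ℝ → ℝ≥0∞) : ℝ → ℝ≥0∞ := fun t =>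
  ENNReal.ofReal (I t / t) * ⨆ s ∈ Set.Ico t 1, ENNReal.ofReal (s / I s) * rearr f s

/-- `H_I f(t) = ∫_t^1 f(s)/I(s) ds`. -/
def HI (I : ℝ → ℝ) (f : ℝ → ℝ≥0∞) : ℝ → ℝ≥0∞ := fun t =>
  ∫⁻ s in Set.Ioo t 1, f s / ENNReal.ofReal (I s)

/-- `R_I f(t) = (1/I(t)) ∫_0^t f(s) ds`. -/
def RI (I : ℝ → ℝ) (f : ℝ → ℝ≥0∞) : ℝ → ℝ≥0∞ := fun t =>
  (ENNReal.ofReal (I t))⁻¹ * ∫⁻ s in Set.Ioo (0:ℝ) t, f s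

/-- `I : (0,1) → (0,1)` is quasiconcave: a nondecreasing bijection of `(0,1)` onto `(0,1)`
with `I(t)/t` nonincreasing, `I(0+) = 0` and `I(1-) = 1`. -/
def Quasiconcave (I : ℝ → ℝ) : Prop :=
  Set.BijOn I (Set.Ioo 0 1) (Set.Ioo 0 1) ∧
  MonotoneOn I (Set.Ioo 0 1) ∧
  AntitoneOn (fun t => I t / t) (Set.Ioo 0 1) ∧
  Tendsto I (nhdsWithin 0 (Set.Ioo 0 1)) (nhds 0) ∧
  Tendsto I (nhdsWithin 1 (Set.Ioo 0 1)) (nhds 1)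

/-- Condition (★): `∫_0^t I(s)/s ds ≲ I(t)`. -/
def StarCond (I : ℝ → ℝ) : Prop :=
  ∃ C : ℝ, 0 < C ∧ ∀ t ∈ Set.Ioo (0:ℝ) 1,
    ∫⁻ s in Set.Ioo (0:ℝ) t, ENNReal.ofReal (I s / s) ≤ ENNReal.ofReal (C * I t)

/-- The average property: `∫_0^t ds/I(s) ≲ t/I(t)`. -/
def AvgProp (I : ℝ → ℝ) : Prop :=
  ∃ C : ℝ, 0 < C ∧ ∀ t ∈ Set.Ioo (0:ℝ) 1,
    ∫⁻ s in Set.Ioo (0:ℝ) t, ENNReal.ofReal (1 / I s) ≤ ENNReal.ofReal (C * (t / I t))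

/-- The condition `∫_t^1 I(s)/s² ds ≲ (1/t) ∫_0^t I(s)/s ds`. -/
def MaxCond (I : ℝ → ℝ) : Prop :=
  ∃ C : ℝ, 0 < C ∧ ∀ t ∈ Set.Ioo (0:ℝ) 1,
    ∫⁻ s in Set.Ioo t 1, ENNReal.ofReal (I s / s ^ 2) ≤
      ENNReal.ofReal (C / t) * ∫⁻ s in Set.Ioo (0:ℝ) t, ENNReal.ofReal (I s / s)

/-- The class `𝒬` of quasiconcave functions. -/
def ClassQ (I : ℝ → ℝ) : Prop :=
  Quasiconcave I ∧ StarCond I ∧ AvgProp I ∧ MaxCond I ∧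
  ∃ c d : ℝ,
    IsLUB {l : ℝ | 0 ≤ l ∧ ∀ t ∈ Set.Ioo (0:ℝ) 1,
      ENNReal.ofReal (l * (I t / t ^ 2 - 1)) ≤
        ∫⁻ s in Set.Ioo t 1, ENNReal.ofReal (I s / s ^ 3)} c ∧
    IsLeast {e : ℝ | 0 < e ∧ ∀ t ∈ Set.Ioo (0:ℝ) 1,
      ∫⁻ s in Set.Ioo t 1, ENNReal.ofReal (I s / s ^ 2) ≤
        ENNReal.ofReal (e * (I t / t))} d ∧
    (1 - c) * d ≤ c

/-- The `Δ₂` condition: `I(2t) ≤ C I(t)` for `t ∈ (0,1/2)`. -/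
def Delta2 (I : ℝ → ℝ) : Prop :=
  ∃ C : ℝ, 0 < C ∧ ∀ t ∈ Set.Ioo (0:ℝ) (1/2), I (2 * t) ≤ C * I t

/-- A rearrangement-invariant Banach function norm on `M₊(0,1)`. -/
def IsRiNorm (ρ : (ℝ → ℝ≥0∞) → ℝ≥0∞) : Prop :=
  (∀ f : ℝ → ℝ≥0∞, Measurable f →
      (ρ f = 0 ↔ f =ᵐ[volume.restrict (Set.Ioo (0:ℝ) 1)] 0)) ∧
  (∀ f : ℝ → ℝ≥0∞, Measurable f → ∀ a : ℝ, 0 ≤ a →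
      ρ (fun t => ENNReal.ofReal a * f t) = ENNReal.ofReal a * ρ f) ∧
  (∀ f g : ℝ → ℝ≥0∞, Measurable f → Measurable g →
      ρ (fun t => f t + g t) ≤ ρ f + ρ g) ∧
  (∀ f g : ℝ → ℝ≥0∞, Measurable f → Measurable g →
      (∀ᵐ t ∂(volume.restrict (Set.Ioo (0:ℝ) 1)), f t ≤ g t) → ρ f ≤ ρ g) ∧
  (∀ (fn : ℕ → ℝ → ℝ≥0∞) (f : ℝ → ℝ≥0∞), (∀ n, Measurable (fn n)) → Measurable f →
      (∀ᵐ t ∂(volume.restrict (Set.Ioo (0:ℝ) 1)), Monotone (fun n => fn n t)) →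
      (∀ᵐ t ∂(volume.restrict (Set.Ioo (0:ℝ) 1)), (⨆ n, fn n t) = f t) →
      (⨆ n, ρ (fn n)) = ρ f) ∧
  (ρ (fun _ => 1) < ⊤) ∧
  (∃ c : ℝ, 0 < c ∧ ∀ f : ℝ → ℝ≥0∞, Measurable f →
      ∫⁻ t in Set.Ioo (0:ℝ) 1, f t ≤ ENNReal.ofReal c * ρ f) ∧
  (∀ f : ℝ → ℝ≥0∞, Measurable f → ρ f = ρ (rearr f))

/-- The associate norm `ρ'`. -/
def assoc (ρ : (ℝ → ℝ≥0∞) → ℝ≥0∞) (f : ℝ → ℝ≥0∞) : ℝ≥0∞ :=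
  ⨆ (g : ℝ → ℝ≥0∞) (_ : Measurable g ∧ ρ g ≤ 1),
    ∫⁻ t in Set.Ioo (0:ℝ) 1, f t * g t

/-- The optimal target norm `‖f‖_{Y_X}` of the r.i. norm `ρ = ‖·‖_X` under `H_I`. -/
def optTargetNorm (I : ℝ → ℝ) (ρ : (ℝ → ℝ≥0∞) → ℝ≥0∞) (f : ℝ → ℝ≥0∞) : ℝ≥0∞ :=
  ⨆ (g : ℝ → ℝ≥0∞) (_ : Measurable g ∧ assoc ρ (RI I (rearr g)) ≤ 1),
    ∫⁻ t in Set.Ioo (0:ℝ) 1, rearr f t * rearr g t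

/-- The optimal domain norm `‖f‖_{X_Y} = sup_{h ∼ f} ‖H_I h‖_Y`. -/
def optDomainNorm (I : ℝ → ℝ) (ρY : (ℝ → ℝ≥0∞) → ℝ≥0∞) (f : ℝ → ℝ≥0∞) : ℝ≥0∞ :=
  ⨆ (h : ℝ → ℝ≥0∞)
    (_ : Measurable h ∧ ∀ t ∈ Set.Ioo (0:ℝ) 1, rearr h t = rearr f t),
      ρY (HI I h)

/-- `H_I : X → Y` boundedly. -/
def HIBounded (I : ℝ → ℝ) (ρX ρY : (ℝ → ℝ≥0∞) → ℝ≥0∞) : Prop :=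
  ∃ C : ℝ, 0 < C ∧ ∀ f : ℝ → ℝ≥0∞, Measurable f →
    ρY (HI I f) ≤ ENNReal.ofReal C * ρX f

/-- `X` is the optimal domain space for `Y` under `H_I`. -/
def IsOptimalDomain (I : ℝ → ℝ) (ρX ρY : (ℝ → ℝ≥0∞) → ℝ≥0∞) : Prop :=
  HIBounded I ρX ρY ∧
  ∀ ρZ : (ℝ → ℝ≥0∞) → ℝ≥0∞, IsRiNorm ρZ → HIBounded I ρZ ρY →
    ∃ C : ℝ, 0 < C ∧ ∀ f : ℝ → ℝ≥0∞, Measurable f →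
      ρX f ≤ ENNReal.ofReal C * ρZ f

/-- `Y` is the optimal target space for `X` under `H_I`. -/
def IsOptimalTarget (I : ℝ → ℝ) (ρX ρY : (ℝ → ℝ≥0∞) → ℝ≥0∞) : Prop :=
  HIBounded I ρX ρY ∧
  ∀ ρZ : (ℝ → ℝ≥0∞) → ℝ≥0∞, IsRiNorm ρZ → HIBounded I ρX ρZ →
    ∃ C : ℝ, 0 < C ∧ ∀ f : ℝ → ℝ≥0∞, Measurable f →
      ρZ f ≤ ENNReal.ofReal C * ρY f

namespace Aux

lemma sep_eq (p : ℝ → Prop) :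
    {s ∈ Set.Ioo (0:ℝ) 1 | p s} = {s | p s} ∩ Set.Ioo (0:ℝ) 1 := by
  ext s; simp [and_comm]

lemma meas_eq (p : ℝ → Prop) :
    volume {s ∈ Set.Ioo (0:ℝ) 1 | p s}
      = (volume.restrict (Set.Ioo (0:ℝ) 1)) {s | p s} := by
  rw [Measure.restrict_apply' measurableSet_Ioo, sep_eq]

lemma rearr_mono_ae {u v : ℝ → ℝ≥0∞} {t : ℝ}
    (h : ∀ᵐ s ∂(volume.restrict (Set.Ioo (0:ℝ) 1)), u s ≤ v s) :
    rearr u t ≤ rearr v t := by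
  apply sInf_le_sInf
  intro l hl
  simp only [Set.mem_setOf_eq] at hl ⊢
  refine le_trans ?_ hl
  rw [meas_eq, meas_eq]
  apply measure_mono_ae
  filter_upwards [h] with s hs hls
  exact lt_of_lt_of_le hls hs

lemma rearr_mono {u v : ℝ → ℝ≥0∞} {t : ℝ} (h : ∀ s, u s ≤ v s) :
    rearr u t ≤ rearr v t :=
  rearr_mono_ae (Filter.Eventually.of_forall h)

lemma rearr_anti (f : ℝ → ℝ≥0∞) {t₁ t₂ : ℝ} (h : t₁ ≤ t₂) :
    rearr f t₂ ≤ rearr f t₁ := by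
  apply sInf_le_sInf
  intro l hl
  exact le_trans hl (ENNReal.ofReal_le_ofReal h)

lemma meas_gt_rearr (f : ℝ → ℝ≥0∞) {t : ℝ} :
    volume {s ∈ Set.Ioo (0:ℝ) 1 | rearr f t < f s} ≤ ENNReal.ofReal t := by
  set lam := rearr f t with hlam
  by_cases hl : lam = ⊤
  · have : {s ∈ Set.Ioo (0:ℝ) 1 | lam < f s} = ∅ := by
      ext s; simp [hl]
    rw [this]; simp
  · set E : ℕ → Set ℝ := fun n => {s ∈ Set.Ioo (0:ℝ) 1 | lam + (n : ℝ≥0∞)⁻¹ < f s} with hE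
    have hmono : Monotone E := by
      intro n m hnm s hs
      refine ⟨hs.1, lt_of_le_of_lt ?_ hs.2⟩
      exact add_le_add_right (ENNReal.inv_le_inv.mpr (by exact_mod_cast hnm : (n : ℝ≥0∞) ≤ m)) _
    have hcover : {s ∈ Set.Ioo (0:ℝ) 1 | lam < f s} ⊆ ⋃ n, E n := by
      intro s hs
      have hpos : f s - lam ≠ 0 := by
        rw [← pos_iff_ne_zero, tsub_pos_iff_lt]; exact hs.2
      obtain ⟨n, hn⟩ := ENNReal.exists_inv_nat_lt hpos
      refine Set.mem_iUnion.2 ⟨n, hs.1, ?_⟩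
      calc lam + (n : ℝ≥0∞)⁻¹ < lam + (f s - lam) := ENNReal.add_lt_add_left hl hn
        _ = f s := add_tsub_cancel_of_le hs.2.le
    have hEn : ∀ n, volume (E n) ≤ ENNReal.ofReal t := by
      intro n
      rcases Nat.eq_zero_or_pos n with h0 | h0
      · have : E n = ∅ := by
          ext s; simp [hE, h0]
        rw [this]; simp
      · have hinvne : ((n : ℝ≥0∞))⁻¹ ≠ 0 := by
          simp [ENNReal.inv_ne_zero]
        have hlt : rearr f t < lam + (n : ℝ≥0∞)⁻¹ := hlam ▸ ENNReal.lt_add_right hl hinvne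
        rw [rearr] at hlt
        obtain ⟨l, hlmem, hllt⟩ := sInf_lt_iff.mp hlt
        refine le_trans (measure_mono ?_) hlmem
        intro s hs
        exact ⟨hs.1, lt_trans hllt hs.2⟩
    calc volume {s ∈ Set.Ioo (0:ℝ) 1 | lam < f s} ≤ volume (⋃ n, E n) := measure_mono hcover
      _ = ⨆ n, volume (E n) := (hmono.directed_le).measure_iUnion
      _ ≤ ENNReal.ofReal t := iSup_le hEn

lemma rearr_add_le (u v : ℝ → ℝ≥0∞) {t : ℝ} :
    rearr (fun s => u s + v s) t
      ≤ essSup u (volume.restrict (Set.Ioo (0:ℝ) 1)) + rearr v t := by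
  set c := essSup u (volume.restrict (Set.Ioo (0:ℝ) 1)) with hc
  set Sv := {l : ℝ≥0∞ | volume {s ∈ Set.Ioo (0:ℝ) 1 | l < v s} ≤ ENNReal.ofReal t} with hSv
  have key : ∀ l ∈ Sv, rearr (fun s => u s + v s) t ≤ c + l := by
    intro l hl
    apply sInf_le
    simp only [Set.mem_setOf_eq] at hl ⊢
    refine le_trans ?_ hl
    rw [meas_eq, meas_eq]
    apply measure_mono_ae
    filter_upwards [ae_le_essSup (f := u) (μ := volume.restrict (Set.Ioo (0:ℝ) 1))] with s hs hmem
    have hmem' : c + l < u s + v s := hmem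
    show l < v s
    by_contra hvs
    push_neg at hvs
    exact absurd (lt_of_lt_of_le hmem' (add_le_add hs hvs)) (lt_irrefl _)
  have h1 : rearr (fun s => u s + v s) t ≤ ⨅ l ∈ Sv, (c + l) := le_iInf₂ key
  refine le_trans h1 ?_
  rw [show rearr v t = sInf Sv from rfl, sInf_eq_iInf]
  rw [ENNReal.add_iInf]
  refine le_of_eq (iInf_congr fun l => ?_)
  rw [ENNReal.add_iInf]

lemma rearr_le_self {g : ℝ → ℝ≥0∞}
    (hg : ∀ a ∈ Set.Ioo (0:ℝ) 1, ∀ b ∈ Set.Ioo (0:ℝ) 1, a ≤ b → g b ≤ g a)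
    {t : ℝ} (ht : t ∈ Set.Ioo (0:ℝ) 1) : rearr g t ≤ g t := by
  apply sInf_le
  simp only [Set.mem_setOf_eq]
  have hsub : {s ∈ Set.Ioo (0:ℝ) 1 | g t < g s} ⊆ Set.Ioo 0 t := by
    intro s hs
    rcases lt_or_ge s t with h | h
    · exact ⟨hs.1.1, h⟩
    · exact absurd (hg t ht s hs.1 h) (not_le.mpr hs.2)
  calc volume {s ∈ Set.Ioo (0:ℝ) 1 | g t < g s} ≤ volume (Set.Ioo 0 t) := measure_mono hsub
    _ = ENNReal.ofReal (t - 0) := Real.volume_Ioo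
    _ = ENNReal.ofReal t := by rw [sub_zero]

lemma inv_mul_le {a x y : ℝ≥0∞} (h0 : a ≠ 0) (ht : a ≠ ⊤) (h : a * x ≤ y) :
    x ≤ a⁻¹ * y := by
  rw [← one_mul x, ← ENNReal.inv_mul_cancel h0 ht, mul_assoc]
  exact mul_le_mul_right h _

end Aux

/-- the numerator of `SI` -/
def Anum (I : ℝ → ℝ) (f : ℝ → ℝ≥0∞) (t : ℝ) : ℝ≥0∞ :=
  ⨆ s ∈ Set.Ioc (0:ℝ) t, ENNReal.ofReal (I s) * rearr f s

lemma SI_eq (I : ℝ → ℝ) (f : ℝ → ℝ≥0∞) (t : ℝ) :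
    SI I f t = (ENNReal.ofReal (I t))⁻¹ * Anum I f t := rfl

lemma Anum_mono (I : ℝ → ℝ) (f : ℝ → ℝ≥0∞) {s t : ℝ} (h : s ≤ t) :
    Anum I f s ≤ Anum I f t :=
  biSup_mono fun u hu => ⟨hu.1, hu.2.trans h⟩

lemma SI_anti (I : ℝ → ℝ) (hmono : MonotoneOn I (Set.Ioo 0 1))
    (hmaps : Set.MapsTo I (Set.Ioo 0 1) (Set.Ioo 0 1)) (f : ℝ → ℝ≥0∞)
    {t₁ t₂ : ℝ} (h1 : t₁ ∈ Set.Ioo (0:ℝ) 1) (h2 : t₂ ∈ Set.Ioo (0:ℝ) 1) (h : t₁ ≤ t₂) :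
    SI I f t₂ ≤ SI I f t₁ := by
  have hI1 := hmaps h1
  have hI2 := hmaps h2
  have hne1 : ENNReal.ofReal (I t₁) ≠ 0 := (ENNReal.ofReal_pos.mpr hI1.1).ne'
  have hbound : rearr f t₁ ≤ (ENNReal.ofReal (I t₁))⁻¹ * Anum I f t₁ :=
    Aux.inv_mul_le hne1 ENNReal.ofReal_ne_top
      (le_biSup (fun s => ENNReal.ofReal (I s) * rearr f s) ⟨h1.1, le_refl t₁⟩)
  rw [SI_eq, Anum, ENNReal.mul_iSup]
  apply iSup_le; intro s
  rw [ENNReal.mul_iSup]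
  apply iSup_le; intro hs
  rcases le_or_gt s t₁ with hst | hst
  · calc (ENNReal.ofReal (I t₂))⁻¹ * (ENNReal.ofReal (I s) * rearr f s)
        ≤ (ENNReal.ofReal (I t₁))⁻¹ * (ENNReal.ofReal (I s) * rearr f s) :=
          mul_le_mul_left (ENNReal.inv_le_inv.mpr
            (ENNReal.ofReal_le_ofReal (hmono h1 h2 h))) _
      _ ≤ (ENNReal.ofReal (I t₁))⁻¹ * Anum I f t₁ :=
          mul_le_mul_right (le_biSup (fun s => ENNReal.ofReal (I s) * rearr f s) (Set.mem_Ioc.mpr ⟨hs.1, hst⟩)) _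
      _ = SI I f t₁ := (SI_eq I f t₁).symm
  · have hs1 : s ∈ Set.Ioo (0:ℝ) 1 := ⟨hs.1, lt_of_le_of_lt hs.2 h2.2⟩
    calc (ENNReal.ofReal (I t₂))⁻¹ * (ENNReal.ofReal (I s) * rearr f s)
        ≤ (ENNReal.ofReal (I t₂))⁻¹ * (ENNReal.ofReal (I t₂) * rearr f t₁) := by
          apply mul_le_mul_right
          exact mul_le_mul' (ENNReal.ofReal_le_ofReal (hmono hs1 h2 hs.2))
            (Aux.rearr_anti f hst.le)
      _ = rearr f t₁ := by
          rw [← mul_assoc, ENNReal.inv_mul_cancel (ENNReal.ofReal_pos.mpr hI2.1).ne'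
            ENNReal.ofReal_ne_top, one_mul]
      _ ≤ (ENNReal.ofReal (I t₁))⁻¹ * Anum I f t₁ := hbound
      _ = SI I f t₁ := (SI_eq I f t₁).symm

/-- Theorem 3.8 / `thm:SImIsNice`.  Let `I ∈ Δ₂` be an increasing bijection
of `(0,1)` onto itself and let `S` be a sublinear operator bounded on `L^∞` and on `m_I`.
Then `(Sf)^* ≲ S_I f`; if moreover `I` has the average property then also
`(Sf)^{**} ≲ S_I f` and `(S_I f)^{**} ≲ S_I f`. -/
theorem statement8 (I : ℝ → ℝ) (hd2 : Delta2 I)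
    (hsm : StrictMonoOn I (Set.Ioo 0 1))
    (hbij : Set.BijOn I (Set.Ioo 0 1) (Set.Ioo 0 1))
    (S : (ℝ → ℝ≥0∞) → (ℝ → ℝ≥0∞))
    (hSmeas : ∀ f : ℝ → ℝ≥0∞, Measurable f → Measurable (S f))
    (hsub : ∀ f g : ℝ → ℝ≥0∞, Measurable f → Measurable g →
      ∀ᵐ t ∂(volume.restrict (Set.Ioo (0:ℝ) 1)),
        S (fun s => f s + g s) t ≤ S f t + S g t)
    (hhom : ∀ (f : ℝ → ℝ≥0∞) (a : ℝ), 0 ≤ a → Measurable f →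
      ∀ᵐ t ∂(volume.restrict (Set.Ioo (0:ℝ) 1)),
        S (fun s => ENNReal.ofReal a * f s) t = ENNReal.ofReal a * S f t)
    (C₀ : ℝ) (hC₀ : 0 < C₀)
    (hinf : ∀ f : ℝ → ℝ≥0∞, Measurable f →
      essSup (S f) (volume.restrict (Set.Ioo (0:ℝ) 1)) ≤
        ENNReal.ofReal C₀ * essSup f (volume.restrict (Set.Ioo (0:ℝ) 1)))
    (hmi : ∀ f : ℝ → ℝ≥0∞, Measurable f →
      mNorm I (S f) ≤ ENNReal.ofReal C₀ * mNorm I f) :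
    ∃ C : ℝ, 0 < C ∧
      (∀ f : ℝ → ℝ≥0∞, Measurable f → mNorm I f < ⊤ → ∀ t ∈ Set.Ioo (0:ℝ) 1,
        rearr (S f) t ≤ ENNReal.ofReal C * SI I f t) ∧
      (AvgProp I →
        (∀ f : ℝ → ℝ≥0∞, Measurable f → mNorm I f < ⊤ → ∀ t ∈ Set.Ioo (0:ℝ) 1,
          dstar (S f) t ≤ ENNReal.ofReal C * SI I f t) ∧
        (∀ f : ℝ → ℝ≥0∞, Measurable f → ∀ t ∈ Set.Ioo (0:ℝ) 1,
          dstar (SI I f) t ≤ ENNReal.ofReal C * SI I f t)) := by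
  classical
  have hImem : ∀ t ∈ Set.Ioo (0:ℝ) 1, I t ∈ Set.Ioo (0:ℝ) 1 := fun t ht => hbij.mapsTo ht
  have hIne0 : ∀ t ∈ Set.Ioo (0:ℝ) 1, ENNReal.ofReal (I t) ≠ 0 :=
    fun t ht => (ENNReal.ofReal_pos.mpr (hImem t ht).1).ne'
  have hμ : volume.restrict (Set.Ioo (0:ℝ) 1) ≠ 0 := by
    rw [Ne, Measure.restrict_eq_zero]
    simp [Real.volume_Ioo]
  -- part 1
  have key : ∀ f : ℝ → ℝ≥0∞, Measurable f → ∀ t ∈ Set.Ioo (0:ℝ) 1,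
      rearr (S f) t ≤ ENNReal.ofReal (2*C₀) * SI I f t := by
    intro f hf t ht
    set lam := rearr f t with hlamdef
    set g : ℝ → ℝ≥0∞ := fun s => min (f s) lam with hgdef
    set h : ℝ → ℝ≥0∞ := fun s => f s - lam with hhdef
    have hgm : Measurable g := hf.min measurable_const
    have hhm : Measurable h := hf.sub measurable_const
    have hfgh : f = fun s => g s + h s := by
      funext s
      rcases le_total (f s) lam with hc | hc
      · simp [hgdef, hhdef, min_eq_left hc, tsub_eq_zero_of_le hc]
      · simp [hgdef, hhdef, min_eq_right hc, add_tsub_cancel_of_le hc]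
    have hae : ∀ᵐ u ∂(volume.restrict (Set.Ioo (0:ℝ) 1)), S f u ≤ S g u + S h u := by
      have h2 := hsub g h hgm hhm
      rwa [← hfgh] at h2
    -- essSup bound
    have hgbd : essSup g (volume.restrict (Set.Ioo (0:ℝ) 1)) ≤ lam := by
      refine le_trans (essSup_mono_ae (Filter.Eventually.of_forall fun s => min_le_right _ _))
        (le_of_eq (essSup_const _ hμ))
    have step3 : essSup (S g) (volume.restrict (Set.Ioo (0:ℝ) 1)) ≤ ENNReal.ofReal C₀ * lam :=
      le_trans (hinf g hgm) (mul_le_mul_right hgbd _)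
    -- mNorm bound
    have hmA : mNorm I h ≤ Anum I f t := by
      apply iSup₂_le
      intro s hs
      rcases le_or_gt s t with hst | hst
      · calc ENNReal.ofReal (I s) * rearr h s
            ≤ ENNReal.ofReal (I s) * rearr f s :=
              mul_le_mul_right (Aux.rearr_mono (fun u => tsub_le_self)) _
          _ ≤ Anum I f t := le_biSup (fun s => ENNReal.ofReal (I s) * rearr f s)
              (Set.mem_Ioc.mpr ⟨hs.1, hst⟩)
      · have h0 : rearr h s = 0 := by
          apply le_antisymm _ zero_le
          apply sInf_le
          show volume {u ∈ Set.Ioo (0:ℝ) 1 | 0 < h u} ≤ ENNReal.ofReal s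
          have heq : {u ∈ Set.Ioo (0:ℝ) 1 | (0:ℝ≥0∞) < h u}
              = {u ∈ Set.Ioo (0:ℝ) 1 | lam < f u} := by
            ext u
            simp only [Set.mem_setOf_eq, hhdef, tsub_pos_iff_lt]
          rw [heq]
          exact le_trans (Aux.meas_gt_rearr f) (ENNReal.ofReal_le_ofReal hst.le)
        simp [h0]
    have step4 : rearr (S h) t
        ≤ (ENNReal.ofReal (I t))⁻¹ * (ENNReal.ofReal C₀ * Anum I f t) := by
      apply Aux.inv_mul_le (hIne0 t ht) ENNReal.ofReal_ne_top
      calc ENNReal.ofReal (I t) * rearr (S h) t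
          ≤ mNorm I (S h) := le_biSup (fun u => ENNReal.ofReal (I u) * rearr (S h) u) ht
        _ ≤ ENNReal.ofReal C₀ * mNorm I h := hmi h hhm
        _ ≤ ENNReal.ofReal C₀ * Anum I f t := mul_le_mul_right hmA _
    have hlamA : lam ≤ (ENNReal.ofReal (I t))⁻¹ * Anum I f t :=
      Aux.inv_mul_le (hIne0 t ht) ENNReal.ofReal_ne_top
        (le_biSup (fun s => ENNReal.ofReal (I s) * rearr f s)
          (Set.mem_Ioc.mpr ⟨ht.1, le_refl t⟩))
    calc rearr (S f) t ≤ rearr (fun u => S g u + S h u) t := Aux.rearr_mono_ae hae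
      _ ≤ essSup (S g) (volume.restrict (Set.Ioo (0:ℝ) 1)) + rearr (S h) t :=
          Aux.rearr_add_le _ _
      _ ≤ ENNReal.ofReal C₀ * lam
            + (ENNReal.ofReal (I t))⁻¹ * (ENNReal.ofReal C₀ * Anum I f t) :=
          add_le_add step3 step4
      _ ≤ ENNReal.ofReal C₀ * ((ENNReal.ofReal (I t))⁻¹ * Anum I f t)
            + ENNReal.ofReal C₀ * ((ENNReal.ofReal (I t))⁻¹ * Anum I f t) := by
          apply add_le_add (mul_le_mul_right hlamA _)
          rw [mul_left_comm]
      _ = ENNReal.ofReal (2*C₀) * SI I f t := by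
          rw [SI_eq, two_mul, ENNReal.ofReal_add hC₀.le hC₀.le, add_mul]
  by_cases hap : AvgProp I
  · obtain ⟨Ca, hCapos, hCaprop⟩ := hap
    set C : ℝ := (2*C₀+1)*(Ca+1) with hCdef
    have hCpos : 0 < C := by positivity
    have hC1 : 2*C₀ ≤ C := by nlinarith
    have hC2 : Ca * (2*C₀) ≤ C := by nlinarith
    have hC3 : Ca ≤ C := by nlinarith
    have hCne0 : ENNReal.ofReal C ≠ 0 := (ENNReal.ofReal_pos.mpr hCpos).ne'
    -- the core averaging estimate
    have core : ∀ (G : ℝ → ℝ≥0∞) (B : ℝ≥0∞), B ≠ ⊤ → ∀ t ∈ Set.Ioo (0:ℝ) 1,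
        (∀ s ∈ Set.Ioo (0:ℝ) t, G s ≤ (ENNReal.ofReal (I s))⁻¹ * B) →
        (ENNReal.ofReal t)⁻¹ * ∫⁻ s in Set.Ioo (0:ℝ) t, G s
          ≤ ENNReal.ofReal Ca * ((ENNReal.ofReal (I t))⁻¹ * B) := by
      intro G B hB t ht hG
      have hstep : ∫⁻ s in Set.Ioo (0:ℝ) t, G s
          ≤ ENNReal.ofReal (Ca * (t / I t)) * B := by
        calc ∫⁻ s in Set.Ioo (0:ℝ) t, G s
            ≤ ∫⁻ s in Set.Ioo (0:ℝ) t, ENNReal.ofReal (1 / I s) * B := by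
              rw [← lintegral_indicator measurableSet_Ioo,
                ← lintegral_indicator measurableSet_Ioo]
              apply lintegral_mono
              intro s
              by_cases hst : s ∈ Set.Ioo (0:ℝ) t
              · rw [Set.indicator_of_mem hst, Set.indicator_of_mem hst]
                have hs1 : s ∈ Set.Ioo (0:ℝ) 1 := ⟨hst.1, hst.2.trans ht.2⟩
                have hGb := hG s hst
                rwa [one_div, ENNReal.ofReal_inv_of_pos (hImem s hs1).1]
              · rw [Set.indicator_of_notMem hst, Set.indicator_of_notMem hst]
          _ = (∫⁻ s in Set.Ioo (0:ℝ) t, ENNReal.ofReal (1 / I s)) * B :=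
              lintegral_mul_const' B _ hB
          _ ≤ ENNReal.ofReal (Ca * (t / I t)) * B := mul_le_mul_left (hCaprop t ht) B
      have ht0 : ENNReal.ofReal t ≠ 0 := (ENNReal.ofReal_pos.mpr ht.1).ne'
      have heq : ENNReal.ofReal (Ca * (t / I t))
          = ENNReal.ofReal Ca * ENNReal.ofReal t * (ENNReal.ofReal (I t))⁻¹ := by
        rw [div_eq_mul_inv, ← mul_assoc, ENNReal.ofReal_mul (mul_nonneg hCapos.le ht.1.le),
          ENNReal.ofReal_mul hCapos.le, ENNReal.ofReal_inv_of_pos (hImem t ht).1]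
      calc (ENNReal.ofReal t)⁻¹ * ∫⁻ s in Set.Ioo (0:ℝ) t, G s
          ≤ (ENNReal.ofReal t)⁻¹ * (ENNReal.ofReal (Ca * (t / I t)) * B) :=
            mul_le_mul_right hstep _
        _ = ENNReal.ofReal Ca * ((ENNReal.ofReal (I t))⁻¹ * B) := by
            rw [heq, show (ENNReal.ofReal t)⁻¹ * (ENNReal.ofReal Ca * ENNReal.ofReal t
                * (ENNReal.ofReal (I t))⁻¹ * B)
              = ((ENNReal.ofReal t)⁻¹ * ENNReal.ofReal t)
                * (ENNReal.ofReal Ca * ((ENNReal.ofReal (I t))⁻¹ * B)) from by ring,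
              ENNReal.inv_mul_cancel ht0 ENNReal.ofReal_ne_top, one_mul]
    refine ⟨C, hCpos, ?_, fun _ => ⟨?_, ?_⟩⟩
    · intro f hf _ t ht
      exact le_trans (key f hf t ht)
        (mul_le_mul_left (ENNReal.ofReal_le_ofReal hC1) _)
    · -- dstar (S f) ≤ C * SI f
      intro f hf _ t ht
      by_cases hA : Anum I f t = ⊤
      · have hSItop : SI I f t = ⊤ := by
          rw [SI_eq, hA, ENNReal.mul_top (ENNReal.inv_ne_zero.mpr ENNReal.ofReal_ne_top)]
        rw [hSItop, ENNReal.mul_top hCne0]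
        exact le_top
      · have hbd : ∀ s ∈ Set.Ioo (0:ℝ) t, rearr (S f) s
            ≤ (ENNReal.ofReal (I s))⁻¹ * (ENNReal.ofReal (2*C₀) * Anum I f t) := by
          intro s hst
          have hs1 : s ∈ Set.Ioo (0:ℝ) 1 := ⟨hst.1, hst.2.trans ht.2⟩
          calc rearr (S f) s ≤ ENNReal.ofReal (2*C₀) * SI I f s := key f hf s hs1
            _ = ENNReal.ofReal (2*C₀) * ((ENNReal.ofReal (I s))⁻¹ * Anum I f s) := by
                rw [SI_eq]
            _ ≤ ENNReal.ofReal (2*C₀) * ((ENNReal.ofReal (I s))⁻¹ * Anum I f t) :=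
                mul_le_mul_right (mul_le_mul_right (Anum_mono I f hst.2.le) _) _
            _ = (ENNReal.ofReal (I s))⁻¹ * (ENNReal.ofReal (2*C₀) * Anum I f t) := by
                ring
        have hcore := core (rearr (S f)) (ENNReal.ofReal (2*C₀) * Anum I f t)
          (ENNReal.mul_ne_top ENNReal.ofReal_ne_top hA) t ht hbd
        refine le_trans hcore ?_
        calc ENNReal.ofReal Ca
              * ((ENNReal.ofReal (I t))⁻¹ * (ENNReal.ofReal (2*C₀) * Anum I f t))
            = ENNReal.ofReal Ca * ENNReal.ofReal (2*C₀)
              * ((ENNReal.ofReal (I t))⁻¹ * Anum I f t) := by ring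
          _ = ENNReal.ofReal (Ca * (2*C₀)) * SI I f t := by
              rw [SI_eq, ENNReal.ofReal_mul hCapos.le]
          _ ≤ ENNReal.ofReal C * SI I f t :=
              mul_le_mul_left (ENNReal.ofReal_le_ofReal hC2) _
    · -- dstar (SI f) ≤ C * SI f
      intro f hf t ht
      by_cases hA : Anum I f t = ⊤
      · have hSItop : SI I f t = ⊤ := by
          rw [SI_eq, hA, ENNReal.mul_top (ENNReal.inv_ne_zero.mpr ENNReal.ofReal_ne_top)]
        rw [hSItop, ENNReal.mul_top hCne0]
        exact le_top
      · have hbd : ∀ s ∈ Set.Ioo (0:ℝ) t, rearr (SI I f) s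
            ≤ (ENNReal.ofReal (I s))⁻¹ * Anum I f t := by
          intro s hst
          have hs1 : s ∈ Set.Ioo (0:ℝ) 1 := ⟨hst.1, hst.2.trans ht.2⟩
          calc rearr (SI I f) s ≤ SI I f s :=
              Aux.rearr_le_self
                (fun a ha b hb hab => SI_anti I hsm.monotoneOn hbij.mapsTo f ha hb hab) hs1
            _ = (ENNReal.ofReal (I s))⁻¹ * Anum I f s := SI_eq I f s
            _ ≤ (ENNReal.ofReal (I s))⁻¹ * Anum I f t :=
                mul_le_mul_right (Anum_mono I f hst.2.le) _
        have hcore := core (rearr (SI I f)) (Anum I f t) hA t ht hbd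
        refine le_trans hcore ?_
        rw [← SI_eq]
        exact mul_le_mul_left (ENNReal.ofReal_le_ofReal hC3) _
  · refine ⟨2*C₀, by positivity, ?_, fun h => absurd h hap⟩
    intro f hf _ t ht
    exact key f hf t ht
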